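/- Let g \in GL_n(F_q) be unipotent (i.e., g - 1 is nilpotent), and set m = dim [V, g] where V = F_q^n and [V, g] = Im(g - 1). Suppose W is a 1-dimensional subspace fixed by g admitting a g-invariant complement W'. Then [V, g] \le W', hence W \cap [V, g] = 0, and the number of g-invariant complements of W is exactly q^{n - m - 1}. -/

import Mathlib

open Submodule LinearMap Module

lemma nilp_of_finrank_one {F M : Type*} [Field F] [AddCommGroup M] [Module F M]
    (h1 : Module.finrank F M = 1) {f : M →ₗ[F] M} (hf : IsNilpotent f) : f = 0 := by
  have : FiniteDimensional F M := FiniteDimensional.of_finrank_eq_succ h1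
  obtain ⟨k, hk⟩ := hf
  rcases eq_or_ne (LinearMap.ker f) ⊥ with hker | hker
  · exfalso
    have hinj : Function.Injective f := ker_eq_bot.mp hker
    have hinjk : Function.Injective (f ^ k) := by
      rw [Module.End.coe_pow]; exact hinj.iterate k
    have : Nontrivial M := Module.nontrivial_of_finrank_eq_succ h1
    obtain ⟨x, hx⟩ := exists_ne (0 : M)
    apply hx
    apply hinjk
    rw [hk]
    simp
  · have hle : finrank F (LinearMap.ker f) ≤ 1 := h1 ▸ Submodule.finrank_le _
    have hne : finrank F (LinearMap.ker f) ≠ 0 :=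
      fun h => hker (Submodule.finrank_eq_zero.mp h)
    have h0 : finrank F (LinearMap.ker f) = 1 := by omega
    exact LinearMap.ker_eq_top.mp (Submodule.eq_top_of_finrank_eq (h0.trans h1.symm))



/-- Let `g` be a unipotent invertible linear endomorphism of a finite-dimensional space
`V` over `F_q`, `m = dim [V,g]` where `[V,g] = Im(g-1)`, and let `W` be a `1`-dimensional
`g`-invariant subspace admitting a `g`-invariant complement `W'`. Then `[V,g] ≤ W'`
(for any such complement), `W ∩ [V,g] = 0`, and the number of `g`-invariant complements
of `W` is exactly `q^(n-m-1)`. -/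
theorem stmt13 (F : Type*) [Field F] [Fintype F]
    (V : Type*) [AddCommGroup V] [Module F V] [FiniteDimensional F V]
    (g : V →ₗ[F] V) (hbij : Function.Bijective g)
    (hunip : IsNilpotent (g - LinearMap.id))
    (W : Submodule F V) (hW1 : Module.finrank F W = 1) (hWg : W.map g = W)
    (W' : Submodule F V) (hc : IsCompl W W') (hW'g : W'.map g = W') :
    LinearMap.range (g - LinearMap.id) ≤ W' ∧
    W ⊓ LinearMap.range (g - LinearMap.id) = ⊥ ∧
    Nat.card {W'' : Submodule F V // IsCompl W W'' ∧ W''.map g = W''} =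
      Fintype.card F ^
        (Module.finrank F V - Module.finrank F (LinearMap.range (g - LinearMap.id)) - 1) := by
  classical
  set h : V →ₗ[F] V := g - LinearMap.id with hh
  have happly : ∀ v : V, h v = g v - v := fun v => by rw [hh]; simp
  have hWg' : ∀ w ∈ W, g w ∈ W := fun w hw => hWg ▸ Submodule.mem_map_of_mem hw
  have hWh : ∀ w ∈ W, h w ∈ W := fun w hw => by
    rw [happly]; exact W.sub_mem (hWg' w hw) hw
  -- h vanishes on W
  have hWker : ∀ w ∈ W, h w = 0 := by
    have hres : h.restrict hWh = 0 := by
      apply nilp_of_finrank_one hW1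
      obtain ⟨k, hk⟩ := hunip
      refine ⟨k, ?_⟩
      rw [Module.End.pow_restrict]
      ext x
      simp [LinearMap.restrict_apply, hk]
    intro w hw
    have := congrArg (fun φ => ((φ ⟨w, hw⟩ : W) : V)) hres
    simpa [LinearMap.restrict_apply] using this
  have claimA : ∀ W'' : Submodule F V, IsCompl W W'' → W''.map g = W'' →
      LinearMap.range h ≤ W'' := by
    intro W'' hcp hinv x hx
    obtain ⟨v, rfl⟩ := hx
    have hv : v ∈ W ⊔ W'' := by rw [hcp.sup_eq_top]; trivial
    obtain ⟨a, ha, b, hb, rfl⟩ := Submodule.mem_sup.mp hv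
    have h1 : h (a + b) = h b := by rw [map_add, hWker a ha, zero_add]
    rw [h1, happly]
    exact W''.sub_mem (hinv ▸ Submodule.mem_map_of_mem hb) hb
  have part1 : LinearMap.range h ≤ W' := claimA W' hc hW'g
  have part2 : W ⊓ LinearMap.range h = ⊥ := by
    rw [eq_bot_iff]
    intro x hx
    have hx' := Submodule.mem_inf.mp hx
    exact hc.disjoint.le_bot (Submodule.mem_inf.mpr ⟨hx'.1, part1 hx'.2⟩)
  have claimB : ∀ W'' : Submodule F V, IsCompl W W'' → LinearMap.range h ≤ W'' →
      W''.map g = W'' := by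
    intro W'' hcp hR
    have hle : W''.map g ≤ W'' := by
      rintro x ⟨v, hv, rfl⟩
      have : g v = v + h v := by rw [happly]; abel
      rw [this]
      exact W''.add_mem hv (hR ⟨v, rfl⟩)
    refine (Submodule.eq_of_le_of_finrank_le hle ?_)
    have : W''.map g = W''.map (LinearEquiv.ofBijective g hbij : V →ₗ[F] V) := rfl
    rw [this, LinearEquiv.finrank_map_eq]
  refine ⟨part1, part2, ?_⟩
  -- the counting part
  set U : Submodule F V := W ⊔ LinearMap.range h with hU
  set f0 : V →ₗ[F] W := Submodule.linearProjOfIsCompl W W' hc with hf0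
  have hf0W : ∀ x : W, f0 (x : V) = x := fun x =>
    Submodule.linearProjOfIsCompl_apply_left hc x
  have hf0R : ∀ x ∈ LinearMap.range h, f0 x = 0 := by
    intro x hx
    have : x ∈ LinearMap.ker f0 := by
      rw [hf0, Submodule.linearProjOfIsCompl, Submodule.ker_projectionOnto]; exact part1 hx
    exact this
  have hUle : ∀ (W'' : Submodule F V) (hcp : IsCompl W W'') (hR : LinearMap.range h ≤ W''),
      U ≤ LinearMap.ker (Submodule.linearProjOfIsCompl W W'' hcp - f0) := by
    intro W'' hcp hR
    rw [hU]
    apply sup_le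
    · intro w hw
      have h1 : Submodule.linearProjOfIsCompl W W'' hcp w = ⟨w, hw⟩ :=
        Submodule.linearProjOfIsCompl_apply_left hcp ⟨w, hw⟩
      have h2 : f0 w = ⟨w, hw⟩ := hf0W ⟨w, hw⟩
      simp [LinearMap.mem_ker, LinearMap.sub_apply, h1, h2]
    · intro r hr
      have h1 : Submodule.linearProjOfIsCompl W W'' hcp r = 0 := by
        have : r ∈ LinearMap.ker (Submodule.linearProjOfIsCompl W W'' hcp) := by
          rw [Submodule.linearProjOfIsCompl, Submodule.ker_projectionOnto]; exact hR hr
        exact this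
      simp [LinearMap.mem_ker, LinearMap.sub_apply, h1, hf0R r hr]
  have hproj : ∀ φ : (V ⧸ U) →ₗ[F] W, ∀ x : W, (f0 + φ ∘ₗ U.mkQ) (x : V) = x := by
    intro φ x
    have hx : U.mkQ (x : V) = 0 := by
      rw [Submodule.mkQ_apply, Submodule.Quotient.mk_eq_zero]
      exact Submodule.mem_sup_left x.2
    simp [LinearMap.add_apply, hf0W x, hx]
  have hRker : ∀ φ : (V ⧸ U) →ₗ[F] W,
      LinearMap.range h ≤ LinearMap.ker (f0 + φ ∘ₗ U.mkQ) := by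
    intro φ x hx
    have hx0 : U.mkQ x = 0 := by
      rw [Submodule.mkQ_apply, Submodule.Quotient.mk_eq_zero]
      exact Submodule.mem_sup_right hx
    simp [LinearMap.mem_ker, LinearMap.add_apply, hf0R x hx, hx0]
  have hinvp : ∀ φ : (V ⧸ U) →ₗ[F] W,
      IsCompl W (LinearMap.ker (f0 + φ ∘ₗ U.mkQ)) ∧
      (LinearMap.ker (f0 + φ ∘ₗ U.mkQ)).map g = LinearMap.ker (f0 + φ ∘ₗ U.mkQ) :=
    fun φ => ⟨LinearMap.isCompl_of_proj (hproj φ),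
      claimB _ (LinearMap.isCompl_of_proj (hproj φ)) (hRker φ)⟩
  have E : {W'' : Submodule F V // IsCompl W W'' ∧ W''.map g = W''} ≃ ((V ⧸ U) →ₗ[F] W) :=
    { toFun := fun s => U.liftQ (Submodule.linearProjOfIsCompl W s.1 s.2.1 - f0)
        (hUle s.1 s.2.1 (claimA s.1 s.2.1 s.2.2))
      invFun := fun φ => ⟨LinearMap.ker (f0 + φ ∘ₗ U.mkQ), hinvp φ⟩
      left_inv := by
        intro s
        apply Subtype.ext
        show LinearMap.ker (f0 + _ ∘ₗ U.mkQ) = s.1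
        rw [Submodule.liftQ_mkQ]
        rw [add_sub_cancel]
        exact Submodule.linearProjOfIsCompl_ker s.2.1
      right_inv := by
        intro φ
        apply Submodule.linearMap_qext
        rw [Submodule.liftQ_mkQ]
        have h1 : Submodule.linearProjOfIsCompl W (LinearMap.ker (f0 + φ ∘ₗ U.mkQ))
            (hinvp φ).1 = f0 + φ ∘ₗ U.mkQ :=
          LinearMap.linearProjOfIsCompl_of_proj _ (hproj φ)
        rw [h1, add_sub_cancel_left] }
  rw [Nat.card_congr E]
  haveI : Finite ((V ⧸ U) →ₗ[F] W) := Module.finite_of_finite F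
  haveI : Fintype ((V ⧸ U) →ₗ[F] W) := Fintype.ofFinite _
  rw [Nat.card_eq_fintype_card, card_eq_pow_finrank (K := F), Module.finrank_linearMap,
    hW1, mul_one]
  congr 1
  have e1 : finrank F (V ⧸ U) + finrank F U = finrank F V :=
    Submodule.finrank_quotient_add_finrank U
  have e2 := Submodule.finrank_sup_add_finrank_inf_eq W (LinearMap.range h)
  rw [part2, finrank_bot, hW1] at e2
  rw [← hU] at e2
  omega
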